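/- arXiv:1403.5654 — 2 statements merged into one kernel-verified Lean document; each statement's English description precedes it below -/
import Mathlib

section
/- For every constant C > 0 and every integer N ≥ 1 there exists a constant C₀ > 0 such that for all λ ∈ ℝ, ∏_{j=1}^∞ (1 + C e^{C|λ|^N − √j / C}) ≤ C₀ e^{C₀ |λ|^{3N}}. -/
open Real

/-- For `t ≥ 0`, `(t/6)^6 ≤ exp t`. -/
private lemma pow_six_le_exp {t : ℝ} (ht : 0 ≤ t) : (t / 6) ^ 6 ≤ Real.exp t := by
  have h1 : t / 6 ≤ Real.exp (t / 6) := by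
    have := Real.add_one_le_exp (t / 6)
    linarith
  have h2 : (t / 6) ^ 6 ≤ (Real.exp (t / 6)) ^ 6 :=
    pow_le_pow_left₀ (by positivity) h1 6
  have h3 : (Real.exp (t / 6)) ^ 6 = Real.exp t := by
    rw [← Real.exp_nat_mul]
    congr 1
    push_cast
    ring
  linarith [h2, h3.le, h3.ge]

/-- Summability of `exp (-√(j+1)/c)` for `c > 0`. -/
private lemma summable_exp_neg_sqrt (c : ℝ) (hc : 0 < c) :
    Summable (fun j : ℕ => Real.exp (-Real.sqrt (j + 1) / c)) := by
  have hsum : Summable (fun j : ℕ => (6 * c) ^ 6 * (1 / ((j : ℝ) + 1) ^ 3)) := by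
    apply Summable.mul_left
    have h : Summable (fun n : ℕ => 1 / ((n : ℝ)) ^ 3) :=
      summable_one_div_nat_pow.mpr (by norm_num)
    have := (summable_nat_add_iff 1).mpr h
    simpa [Nat.cast_add] using this
  apply Summable.of_nonneg_of_le (fun j => (Real.exp_pos _).le) _ hsum
  intro j
  have hj1 : (0 : ℝ) < (j : ℝ) + 1 := by positivity
  set t := Real.sqrt ((j : ℝ) + 1) with htdef
  have ht0 : 0 < t := Real.sqrt_pos.mpr hj1
  have ht6 : t ^ 6 = ((j : ℝ) + 1) ^ 3 := by
    have : t ^ 6 = (t ^ 2) ^ 3 := by ring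
    rw [this, Real.sq_sqrt hj1.le]
  have hkey : ((j : ℝ) + 1) ^ 3 / (6 * c) ^ 6 ≤ Real.exp (t / c) := by
    have := pow_six_le_exp (t := t / c) (by positivity)
    have heq : (t / c / 6) ^ 6 = ((j : ℝ) + 1) ^ 3 / (6 * c) ^ 6 := by
      rw [div_pow, div_pow, ht6]
      ring
    linarith [heq ▸ this]
  have hexp : Real.exp (-t / c) = 1 / Real.exp (t / c) := by
    rw [neg_div, Real.exp_neg]
    ring
  rw [hexp]
  calc (1 : ℝ) / Real.exp (t / c) ≤ 1 / (((j : ℝ) + 1) ^ 3 / (6 * c) ^ 6) := by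
        apply one_div_le_one_div_of_le (by positivity) hkey
    _ = (6 * c) ^ 6 * (1 / ((j : ℝ) + 1) ^ 3) := by
        field_simp

/-- For `x ≥ 0`, `x ≤ 1 + x ^ 3` and `x ^ 2 ≤ 1 + x ^ 3`. -/
private lemma le_one_add_cube {x : ℝ} (hx : 0 ≤ x) :
    x ≤ 1 + x ^ 3 ∧ x ^ 2 ≤ 1 + x ^ 3 := by
  constructor
  · nlinarith [sq_nonneg (x - 1), sq_nonneg x, mul_nonneg hx (sq_nonneg (x - 1))]
  · nlinarith [sq_nonneg (x - 1), mul_nonneg hx (sq_nonneg (x - 1))]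

set_option maxHeartbeats 1000000 in
/-- For every `C > 0` and integer `N ≥ 1` there is `C₀ > 0` such that for all
real `λ`, `∏_{j=1}^∞ (1 + C e^{C|λ|^N − √j / C}) ≤ C₀ e^{C₀ |λ|^{3N}}`.
(The product over `j ≥ 1` is written as a product over `j : ℕ` of the factor at `j + 1`.) -/
theorem infinite_product_estimate (C : ℝ) (hC : 0 < C) (N : ℕ) (hN : 1 ≤ N) :
    ∃ C₀ : ℝ, 0 < C₀ ∧ ∀ l : ℝ,
      (∏' j : ℕ, (1 + C * Real.exp (C * |l| ^ N - Real.sqrt (j + 1) / C)))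
        ≤ C₀ * Real.exp (C₀ * |l| ^ (3 * N)) := by
  have hS₂sum : Summable (fun j : ℕ => Real.exp (-Real.sqrt (j + 1) / (2 * C))) :=
    summable_exp_neg_sqrt (2 * C) (by positivity)
  set S₂ : ℝ := ∑' j : ℕ, Real.exp (-Real.sqrt ((j : ℝ) + 1) / (2 * C)) with hS₂def
  have hS₂nonneg : 0 ≤ S₂ := tsum_nonneg fun j => (Real.exp_pos _).le
  have hlogC : 0 < Real.log (1 + C) := Real.log_pos (by linarith)
  set D : ℝ := 4 * C ^ 4 * Real.log (1 + C) + 4 * C ^ 5 + Real.log (1 + C) + C + C * S₂ + 1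
    with hDdef
  have hD0 : 0 < D := by
    have : 0 ≤ C * S₂ := mul_nonneg hC.le hS₂nonneg
    nlinarith [pow_pos hC 4, pow_pos hC 5]
  refine ⟨Real.exp D, Real.exp_pos D, fun l => ?_⟩
  set x : ℝ := |l| ^ N with hxdef
  have hx0 : 0 ≤ x := pow_nonneg (abs_nonneg l) N
  -- the factors
  set a : ℕ → ℝ := fun j => C * Real.exp (C * x - Real.sqrt ((j : ℝ) + 1) / C) with hadef
  have ha_pos : ∀ j, 0 < a j := fun j => by positivity
  have hfac_pos : ∀ j, (0 : ℝ) < 1 + a j := fun j => by linarith [ha_pos j]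
  -- log bounds
  have hg0 : ∀ j, 0 ≤ Real.log (1 + a j) :=
    fun j => Real.log_nonneg (by linarith [ha_pos j])
  have hgle : ∀ j, Real.log (1 + a j) ≤ a j := by
    intro j
    have := Real.log_le_sub_one_of_pos (hfac_pos j)
    linarith
  -- a is summable
  have ha_eq : ∀ j : ℕ, a j = (C * Real.exp (C * x)) * Real.exp (-Real.sqrt ((j : ℝ) + 1) / C) := by
    intro j
    rw [hadef]
    simp only
    rw [mul_assoc, ← Real.exp_add]
    ring_nf
  have hasum : Summable a := by
    have := (summable_exp_neg_sqrt C hC).mul_left (C * Real.exp (C * x))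
    apply this.congr
    intro j
    exact (ha_eq j).symm
  have hgsum : Summable (fun j => Real.log (1 + a j)) :=
    Summable.of_nonneg_of_le hg0 hgle hasum
  -- the product equals exp of the sum of logs
  have hprod : (∏' j : ℕ, (1 + a j)) = Real.exp (∑' j : ℕ, Real.log (1 + a j)) := by
    have := Real.rexp_tsum_eq_tprod (f := fun j => 1 + a j) hfac_pos hgsum
    exact this.symm
  -- split the sum at M
  set M : ℕ := ⌈(2 * C ^ 2 * x) ^ 2⌉₊ with hMdef
  have hMle : ((2 : ℝ) * C ^ 2 * x) ^ 2 ≤ (M : ℝ) := Nat.le_ceil _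
  have hMub : (M : ℝ) ≤ (2 * C ^ 2 * x) ^ 2 + 1 := (Nat.ceil_lt_add_one (by positivity)).le
  have hsplit : (∑' j : ℕ, Real.log (1 + a j)) =
      (∑ i ∈ Finset.range M, Real.log (1 + a i)) + ∑' j : ℕ, Real.log (1 + a (j + M)) :=
    (Summable.sum_add_tsum_nat_add M hgsum).symm
  -- head bound: each term ≤ log(1+C) + C*x
  have hhead_term : ∀ j : ℕ, Real.log (1 + a j) ≤ Real.log (1 + C) + C * x := by
    intro j
    have hsq : 0 ≤ Real.sqrt ((j : ℝ) + 1) / C := by positivity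
    have h1 : a j ≤ C * Real.exp (C * x) := by
      rw [hadef]
      simp only
      have : Real.exp (C * x - Real.sqrt ((j : ℝ) + 1) / C) ≤ Real.exp (C * x) :=
        Real.exp_le_exp.mpr (by linarith)
      nlinarith [Real.exp_pos (C * x - Real.sqrt ((j : ℝ) + 1) / C)]
    have h2 : (1 : ℝ) + a j ≤ (1 + C) * Real.exp (C * x) := by
      have hexp1 : (1 : ℝ) ≤ Real.exp (C * x) := Real.one_le_exp (by positivity)
      nlinarith
    have h3 : Real.log (1 + a j) ≤ Real.log ((1 + C) * Real.exp (C * x)) :=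
      Real.log_le_log (hfac_pos j) h2
    rwa [Real.log_mul (by linarith) (Real.exp_ne_zero _), Real.log_exp] at h3
  have hhead : (∑ i ∈ Finset.range M, Real.log (1 + a i)) ≤
      (M : ℝ) * (Real.log (1 + C) + C * x) := by
    calc (∑ i ∈ Finset.range M, Real.log (1 + a i))
        ≤ ∑ _i ∈ Finset.range M, (Real.log (1 + C) + C * x) :=
          Finset.sum_le_sum fun i _ => hhead_term i
      _ = (M : ℝ) * (Real.log (1 + C) + C * x) := by
          rw [Finset.sum_const, Finset.card_range, nsmul_eq_mul]
  -- tail bound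
  have htail_term : ∀ j : ℕ, Real.log (1 + a (j + M)) ≤
      C * Real.exp (-Real.sqrt ((j : ℝ) + 1) / (2 * C)) := by
    intro j
    have hjM : ((2 : ℝ) * C ^ 2 * x) ^ 2 ≤ ((j : ℝ) + (M : ℝ)) + 1 := by
      have : (M : ℝ) ≤ ((j : ℝ) + (M : ℝ)) + 1 := by
        have : (0 : ℝ) ≤ (j : ℝ) := Nat.cast_nonneg j
        linarith
      linarith [hMle]
    have hsq : 2 * C ^ 2 * x ≤ Real.sqrt (((j : ℝ) + (M : ℝ)) + 1) := by
      have := Real.sqrt_le_sqrt hjM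
      rwa [Real.sqrt_sq (by positivity)] at this
    have hexpo : C * x - Real.sqrt (((j : ℝ) + (M : ℝ)) + 1) / C ≤
        -Real.sqrt (((j : ℝ) + (M : ℝ)) + 1) / (2 * C) := by
      have hCx : C * x ≤ Real.sqrt (((j : ℝ) + (M : ℝ)) + 1) / (2 * C) := by
        rw [le_div_iff₀ (by positivity)]
        nlinarith
      have : Real.sqrt (((j : ℝ) + (M : ℝ)) + 1) / (2 * C) -
          Real.sqrt (((j : ℝ) + (M : ℝ)) + 1) / C =
          -Real.sqrt (((j : ℝ) + (M : ℝ)) + 1) / (2 * C) := by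
        field_simp
        ring
      linarith
    have hmono : -Real.sqrt (((j : ℝ) + (M : ℝ)) + 1) / (2 * C) ≤
        -Real.sqrt ((j : ℝ) + 1) / (2 * C) := by
      have h1 : Real.sqrt ((j : ℝ) + 1) ≤ Real.sqrt (((j : ℝ) + (M : ℝ)) + 1) := by
        apply Real.sqrt_le_sqrt
        have : (0 : ℝ) ≤ (M : ℝ) := Nat.cast_nonneg M
        linarith
      have h2 : (0 : ℝ) < 2 * C := by positivity
      rw [div_le_div_iff_of_pos_right h2]
      linarith
    calc Real.log (1 + a (j + M)) ≤ a (j + M) := hgle (j + M)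
      _ = C * Real.exp (C * x - Real.sqrt (((j : ℝ) + (M : ℝ)) + 1) / C) := by
          rw [hadef]; simp only; push_cast; ring_nf
      _ ≤ C * Real.exp (-Real.sqrt ((j : ℝ) + 1) / (2 * C)) := by
          apply mul_le_mul_of_nonneg_left _ hC.le
          exact Real.exp_le_exp.mpr (le_trans hexpo hmono)
  have htail : (∑' j : ℕ, Real.log (1 + a (j + M))) ≤ C * S₂ := by
    have hsum1 : Summable (fun j : ℕ => Real.log (1 + a (j + M))) :=
      (summable_nat_add_iff M).mpr hgsum
    have hsum2 : Summable (fun j : ℕ => C * Real.exp (-Real.sqrt ((j : ℝ) + 1) / (2 * C))) :=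
      hS₂sum.mul_left C
    calc (∑' j : ℕ, Real.log (1 + a (j + M)))
        ≤ ∑' j : ℕ, C * Real.exp (-Real.sqrt ((j : ℝ) + 1) / (2 * C)) :=
          Summable.tsum_le_tsum htail_term hsum1 hsum2
      _ = C * S₂ := tsum_mul_left
  -- combine
  have hsum_bound : (∑' j : ℕ, Real.log (1 + a j)) ≤ D + D * x ^ 3 := by
    rw [hsplit]
    have h1 : (∑ i ∈ Finset.range M, Real.log (1 + a i)) +
        (∑' j : ℕ, Real.log (1 + a (j + M))) ≤
        (M : ℝ) * (Real.log (1 + C) + C * x) + C * S₂ := by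
      linarith [hhead, htail]
    have h2 : (M : ℝ) * (Real.log (1 + C) + C * x) ≤
        ((2 * C ^ 2 * x) ^ 2 + 1) * (Real.log (1 + C) + C * x) := by
      apply mul_le_mul_of_nonneg_right hMub
      have : 0 ≤ C * x := mul_nonneg hC.le hx0
      linarith
    have hx1 : x ≤ 1 + x ^ 3 := (le_one_add_cube hx0).1
    have hx2 : x ^ 2 ≤ 1 + x ^ 3 := (le_one_add_cube hx0).2
    have h3 : ((2 * C ^ 2 * x) ^ 2 + 1) * (Real.log (1 + C) + C * x) + C * S₂ ≤
        D + D * x ^ 3 := by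
      have hexp : ((2 * C ^ 2 * x) ^ 2 + 1) * (Real.log (1 + C) + C * x) =
          4 * C ^ 4 * Real.log (1 + C) * x ^ 2 + 4 * C ^ 5 * x ^ 3 +
          Real.log (1 + C) + C * x := by ring
      rw [hexp, hDdef]
      have t1 : 4 * C ^ 4 * Real.log (1 + C) * x ^ 2 ≤
          4 * C ^ 4 * Real.log (1 + C) * (1 + x ^ 3) := by
        apply mul_le_mul_of_nonneg_left hx2
        positivity
      have t2 : C * x ≤ C * (1 + x ^ 3) := mul_le_mul_of_nonneg_left hx1 hC.le
      have t3 : 0 ≤ C * S₂ := mul_nonneg hC.le hS₂nonneg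
      have t4 : 0 ≤ x ^ 3 := by positivity
      nlinarith [t1, t2, t3, t4, mul_nonneg hlogC.le t4,
        mul_nonneg (mul_nonneg hC.le hS₂nonneg) t4, pow_pos hC 5, pow_pos hC 4]
    linarith
  -- finish
  have hrw : |l| ^ (3 * N) = x ^ 3 := by
    rw [hxdef, ← pow_mul, mul_comm]
  have hDexp : D ≤ Real.exp D := by linarith [Real.add_one_le_exp D]
  have hx3 : 0 ≤ x ^ 3 := by positivity
  calc (∏' j : ℕ, (1 + C * Real.exp (C * |l| ^ N - Real.sqrt ((j : ℕ) + 1) / C)))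
      = (∏' j : ℕ, (1 + a j)) := by rfl
    _ = Real.exp (∑' j : ℕ, Real.log (1 + a j)) := hprod
    _ ≤ Real.exp (D + D * x ^ 3) := Real.exp_le_exp.mpr hsum_bound
    _ = Real.exp D * Real.exp (D * x ^ 3) := by rw [Real.exp_add]
    _ ≤ Real.exp D * Real.exp (Real.exp D * x ^ 3) := by
        apply mul_le_mul_of_nonneg_left _ (Real.exp_pos D).le
        exact Real.exp_le_exp.mpr (mul_le_mul_of_nonneg_right hDexp hx3)
    _ = Real.exp D * Real.exp (Real.exp D * |l| ^ (3 * N)) := by rw [hrw]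
end

section
/- For every C > 0 there is a constant C₁ such that for all λ ∈ ℝ, ∫_0^∞ log(1 + C e^{C|λ|^N − √x / C}) dx ≤ C₁ (1 + |λ|^{3N}). -/
open Real MeasureTheory

lemma exp_neg_le_cube (s : ℝ) (hs : 0 < s) : Real.exp (-s) ≤ 27 / s ^ 3 := by
  have h1 : s / 3 ≤ Real.exp (s / 3) := by
    have := Real.add_one_le_exp (s / 3)
    linarith
  have h2 : (s / 3) ^ 3 ≤ Real.exp s := by
    calc (s / 3) ^ 3 ≤ Real.exp (s / 3) ^ 3 :=
          pow_le_pow_left₀ (by positivity) h1 3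
      _ = Real.exp (3 * (s / 3)) := (Real.exp_nat_mul _ 3).symm
      _ = Real.exp s := by ring_nf
  have hs3 : 0 < (s / 3) ^ 3 := by positivity
  rw [Real.exp_neg]
  rw [inv_le_iff_one_le_mul₀ (Real.exp_pos s)] at *
  have : (27 : ℝ) / s ^ 3 * Real.exp s ≥ 27 / s ^ 3 * ((s/3)^3) := by
    apply mul_le_mul_of_nonneg_left h2 (by positivity)
  have heq : (27 : ℝ) / s ^ 3 * ((s/3)^3) = 1 := by
    field_simp; ring
  linarith [mul_le_mul_of_nonneg_left h2 (show (0:ℝ) ≤ 27 / s ^ 3 by positivity)]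

lemma poly_final (C L m : ℝ) (hC : 0 < C) (hL : 0 ≤ L) (hm : 0 ≤ m) :
    (L + C * m) * (C * (C * m + 1)) ^ 2 + 54 * C ^ 3 * (C * m + 1) ^ 2
      ≤ 7 * (C + 1) ^ 3 * (C ^ 2 * (L + 1) + 54 * C ^ 3) * (1 + m ^ 3) := by
  have e1 : C * m + 1 ≤ (C + 1) * (m + 1) := by nlinarith
  have e2 : L + C * m ≤ (L + 1) * ((C + 1) * (m + 1)) := by
    nlinarith [mul_nonneg hL hm, mul_nonneg hL hC.le, mul_nonneg hC.le hm,
      mul_nonneg (mul_nonneg hL hC.le) hm]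
  have e3 : (m + 1) ^ 3 ≤ 7 * (1 + m ^ 3) := by
    nlinarith [mul_nonneg (sq_nonneg (m - 1)) hm, sq_nonneg (m - 1)]
  have h1 : (L + C * m) * (C * (C * m + 1)) ^ 2
      ≤ C ^ 2 * (L + 1) * ((C + 1) * (m + 1)) ^ 3 := by
    have hcm : 0 ≤ C * m + 1 := by positivity
    have := mul_le_mul e2 (mul_le_mul_of_nonneg_left (pow_le_pow_left₀ hcm e1 2)
      (le_of_lt (by positivity : (0:ℝ) < C ^ 2))) (by positivity) (by positivity)
    calc (L + C * m) * (C * (C * m + 1)) ^ 2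
        = (L + C * m) * (C ^ 2 * (C * m + 1) ^ 2) := by ring
      _ ≤ (L + 1) * ((C + 1) * (m + 1)) * (C ^ 2 * ((C + 1) * (m + 1)) ^ 2) := this
      _ = C ^ 2 * (L + 1) * ((C + 1) * (m + 1)) ^ 3 := by ring
  have h2 : 54 * C ^ 3 * (C * m + 1) ^ 2 ≤ 54 * C ^ 3 * ((C + 1) * (m + 1)) ^ 3 := by
    have hcm : 0 ≤ C * m + 1 := by positivity
    have g1 : (C * m + 1) ^ 2 ≤ ((C + 1) * (m + 1)) ^ 2 := pow_le_pow_left₀ hcm e1 2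
    have g2 : ((C + 1) * (m + 1)) ^ 2 ≤ ((C + 1) * (m + 1)) ^ 3 := by
      apply pow_le_pow_right₀ (by nlinarith)
      norm_num
    have := g1.trans g2
    nlinarith [this, (show (0:ℝ) < C ^ 3 by positivity)]
  have h3 : ((C + 1) * (m + 1)) ^ 3 = (C + 1) ^ 3 * (m + 1) ^ 3 := by ring
  have h4 : (C + 1) ^ 3 * (m + 1) ^ 3 ≤ (C + 1) ^ 3 * (7 * (1 + m ^ 3)) :=
    mul_le_mul_of_nonneg_left e3 (by positivity)
  nlinarith [h1, h2, h4, (show (0:ℝ) ≤ C ^ 2 * (L + 1) by positivity),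
    (show (0:ℝ) < C ^ 3 by positivity),
    mul_le_mul_of_nonneg_left h4 (show (0:ℝ) ≤ C ^ 2 * (L + 1) by positivity),
    mul_le_mul_of_nonneg_left h4 (show (0:ℝ) ≤ 54 * C ^ 3 by positivity)]

/-- For a fixed integer `N ≥ 1` and every `C > 0` there is a constant `C₁`
such that for all real `λ`,
`∫_0^∞ log(1 + C e^{C|λ|^N − √x / C}) dx ≤ C₁ (1 + |λ|^{3N})`. -/
theorem integral_log_estimate (N : ℕ) (hN : 1 ≤ N) (C : ℝ) (hC : 0 < C) :
    ∃ C₁ : ℝ, ∀ l : ℝ,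
      (∫ x in Set.Ioi (0 : ℝ),
          Real.log (1 + C * Real.exp (C * |l| ^ N - Real.sqrt x / C)))
        ≤ C₁ * (1 + |l| ^ (3 * N)) := by
  set L := Real.log (1 + C) with hL
  have hL0 : 0 ≤ L := Real.log_nonneg (by linarith)
  refine ⟨7 * (C + 1) ^ 3 * (C ^ 2 * (L + 1) + 54 * C ^ 3), fun l => ?_⟩
  set m := |l| ^ N with hm
  have hm0 : 0 ≤ m := by positivity
  set a := C * m with ha
  have ha0 : 0 ≤ a := by positivity
  set b := C * (a + 1) with hb
  have hb0 : 0 < b := by positivity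
  set x₁ := b ^ 2 with hx₁def
  have hx₁ : 0 < x₁ := by positivity
  set f := fun x : ℝ => Real.log (1 + C * Real.exp (a - Real.sqrt x / C)) with hf
  -- positivity of the argument of log
  have harg : ∀ x : ℝ, (1:ℝ) ≤ 1 + C * Real.exp (a - Real.sqrt x / C) := fun x => by
    nlinarith [Real.exp_pos (a - Real.sqrt x / C), hC]
  have hfpos : ∀ x : ℝ, 0 ≤ f x := fun x => Real.log_nonneg (harg x)
  -- continuity of f
  have hfc : Continuous f := by
    apply Continuous.log
    · exact continuous_const.add (continuous_const.mul
        (Real.continuous_exp.comp (continuous_const.sub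
          (Real.continuous_sqrt.div_const C))))
    · intro x; have := harg x; linarith
  -- bound 1 : f x ≤ L + a  for x ≥ 0
  have hbd1 : ∀ x : ℝ, 0 ≤ x → f x ≤ L + a := by
    intro x hx
    have h1 : Real.exp (a - Real.sqrt x / C) ≤ Real.exp a := by
      apply Real.exp_le_exp.2
      have : 0 ≤ Real.sqrt x / C := by positivity
      linarith
    have h2 : (1:ℝ) + C * Real.exp (a - Real.sqrt x / C) ≤ (1 + C) * Real.exp a := by
      have hea : (1:ℝ) ≤ Real.exp a := Real.one_le_exp ha0
      nlinarith [h1, hC.le]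
    have h3 : f x ≤ Real.log ((1 + C) * Real.exp a) :=
      Real.log_le_log (by linarith [harg x]) h2
    rwa [Real.log_mul (by linarith) (Real.exp_ne_zero a), Real.log_exp] at h3
  -- bound 2 (tail) : f x ≤ 27 * C * b^3 * x ^ (-(3/2))
  have hbd2 : ∀ x ∈ Set.Ioi x₁, f x ≤ 27 * C * b ^ 3 * x ^ (-(3/2) : ℝ) := by
    intro x hx
    have hxpos : 0 < x := lt_trans hx₁ hx
    set t := Real.sqrt x with ht
    have htb : b ≤ t := by
      have : Real.sqrt x₁ ≤ t := Real.sqrt_le_sqrt (le_of_lt hx)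
      rwa [hx₁def, Real.sqrt_sq hb0.le] at this
    have htpos : 0 < t := lt_of_lt_of_le hb0 htb
    set s := t / C - a with hs
    have hs0 : 0 < s := by
      have h : a * C < t := by nlinarith [htb, hb]
      have h2 : a < t / C := (lt_div_iff₀ hC).2 h
      rw [hs]; linarith
    have hsval : s = (t - C * a) / C := by rw [hs]; field_simp
    have hs1 : t / b ≤ s := by
      rw [hsval, div_le_div_iff₀ hb0 hC, hb]
      have hint : 0 ≤ C * a * (t - C * (a + 1)) :=
        mul_nonneg (mul_nonneg hC.le ha0) (by rw [← hb]; linarith)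
      nlinarith [hint]
    -- log(1+u) ≤ u
    have hlog : f x ≤ C * Real.exp (a - t / C) := by
      have := Real.log_le_sub_one_of_pos (show (0:ℝ) < 1 + C * Real.exp (a - t / C) by
        linarith [harg x])
      simpa using this
    have hexp : Real.exp (a - t / C) ≤ 27 / s ^ 3 := by
      have : a - t / C = -s := by rw [hs]; ring
      rw [this]
      exact exp_neg_le_cube s hs0
    have hsb : 27 / s ^ 3 ≤ 27 * b ^ 3 / t ^ 3 := by
      have h1 : (t / b) ^ 3 ≤ s ^ 3 := pow_le_pow_left₀ (by positivity) hs1 3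
      have h2 : (t / b) ^ 3 = t ^ 3 / b ^ 3 := by rw [div_pow]
      have htb3 : 0 < t ^ 3 / b ^ 3 := by positivity
      rw [div_le_div_iff₀ (by positivity) (by positivity)]
      calc 27 * t ^ 3 = 27 * (t ^ 3 / b ^ 3) * b ^ 3 := by field_simp
        _ ≤ 27 * s ^ 3 * b ^ 3 := by
            apply mul_le_mul_of_nonneg_right _ (by positivity)
            rw [← h2] at *
            nlinarith [h1]
        _ = 27 * b ^ 3 * s ^ 3 := by ring
    have hrpow : x ^ (-(3/2) : ℝ) = 1 / t ^ 3 := by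
      rw [ht, Real.sqrt_eq_rpow]
      rw [← Real.rpow_natCast (x ^ ((1:ℝ)/2)) 3, ← Real.rpow_mul hxpos.le]
      rw [Real.rpow_neg hxpos.le, one_div]
      norm_num
    calc f x ≤ C * Real.exp (a - t / C) := hlog
      _ ≤ C * (27 * b ^ 3 / t ^ 3) := by
          apply mul_le_mul_of_nonneg_left (hexp.trans hsb) hC.le
      _ = 27 * C * b ^ 3 * x ^ (-(3/2) : ℝ) := by rw [hrpow]; ring
  -- integrability on Ioc 0 x₁
  have I1 : IntegrableOn f (Set.Ioc 0 x₁) := hfc.integrableOn_Ioc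
  -- integrability of majorant on the tail
  have Imaj : IntegrableOn (fun x : ℝ => 27 * C * b ^ 3 * x ^ (-(3/2) : ℝ)) (Set.Ioi x₁) :=
    (integrableOn_Ioi_rpow_of_lt (by norm_num) hx₁).const_mul _
  -- integrability of f on tail
  have I2 : IntegrableOn f (Set.Ioi x₁) := by
    apply Integrable.mono Imaj hfc.aestronglyMeasurable.restrict
    rw [ae_restrict_iff' measurableSet_Ioi]
    filter_upwards with x hx
    rw [Real.norm_eq_abs, Real.norm_eq_abs, abs_of_nonneg (hfpos x)]
    have hxpos : 0 < x := lt_trans hx₁ hx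
    have : 0 ≤ 27 * C * b ^ 3 * x ^ (-(3/2) : ℝ) := by positivity
    rw [abs_of_nonneg this]
    exact hbd2 x hx
  -- split the integral
  have hsplit : Set.Ioi (0:ℝ) = Set.Ioc 0 x₁ ∪ Set.Ioi x₁ :=
    (Set.Ioc_union_Ioi_eq_Ioi hx₁.le).symm
  have hIsum : ∫ x in Set.Ioi (0:ℝ), f x
      = (∫ x in Set.Ioc 0 x₁, f x) + ∫ x in Set.Ioi x₁, f x := by
    rw [hsplit]
    exact setIntegral_union Set.Ioc_disjoint_Ioi_same measurableSet_Ioi I1 I2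
  -- bound piece 1
  have hp1 : (∫ x in Set.Ioc 0 x₁, f x) ≤ (L + a) * x₁ := by
    have : (∫ x in Set.Ioc 0 x₁, f x) ≤ ∫ _x in Set.Ioc 0 x₁, (L + a) := by
      apply setIntegral_mono_on I1
        (integrableOn_const measure_Ioc_lt_top.ne) measurableSet_Ioc
      intro x hx
      exact hbd1 x hx.1.le
    rw [setIntegral_const, Real.volume_real_Ioc_of_le (by linarith), smul_eq_mul] at this
    rw [sub_zero] at this
    linarith [this]
  -- bound piece 2
  have hp2 : (∫ x in Set.Ioi x₁, f x) ≤ 54 * C * b ^ 2 := by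
    have h1 : (∫ x in Set.Ioi x₁, f x)
        ≤ ∫ x in Set.Ioi x₁, 27 * C * b ^ 3 * x ^ (-(3/2) : ℝ) :=
      setIntegral_mono_on I2 Imaj measurableSet_Ioi hbd2
    have h2 : (∫ x in Set.Ioi x₁, 27 * C * b ^ 3 * x ^ (-(3/2) : ℝ))
        = 27 * C * b ^ 3 * ∫ x in Set.Ioi x₁, x ^ (-(3/2) : ℝ) := by
      exact MeasureTheory.integral_const_mul _ _
    have h3 : (∫ x in Set.Ioi x₁, x ^ (-(3/2) : ℝ))
        = -x₁ ^ ((-(3/2) : ℝ) + 1) / ((-(3/2) : ℝ) + 1) :=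
      integral_Ioi_rpow_of_lt (by norm_num) hx₁
    have h4 : x₁ ^ ((-(3/2) : ℝ) + 1) = b⁻¹ := by
      have : ((-(3/2) : ℝ) + 1) = -(1/2 : ℝ) := by norm_num
      rw [this, hx₁def, ← Real.rpow_natCast b 2, ← Real.rpow_mul hb0.le]
      norm_num
      rw [Real.rpow_neg_one]
    rw [h2, h3, h4] at h1
    have : 27 * C * b ^ 3 * (-b⁻¹ / ((-(3/2) : ℝ) + 1)) = 54 * C * b ^ 2 := by
      field_simp
      ring
    linarith [h1, this.le, this.ge]
  -- combine
  have hfin : (∫ x in Set.Ioi (0:ℝ), f x) ≤ (L + a) * x₁ + 54 * C * b ^ 2 := by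
    rw [hIsum]; linarith
  have hpow : |l| ^ (3 * N) = m ^ 3 := by
    rw [hm, ← pow_mul, Nat.mul_comm]
  rw [show (∫ x in Set.Ioi (0:ℝ),
      Real.log (1 + C * Real.exp (C * |l| ^ N - Real.sqrt x / C))) = ∫ x in Set.Ioi (0:ℝ), f x
      from rfl, hpow]
  calc (∫ x in Set.Ioi (0:ℝ), f x) ≤ (L + a) * x₁ + 54 * C * b ^ 2 := hfin
    _ = (L + C * m) * (C * (C * m + 1)) ^ 2 + 54 * C ^ 3 * (C * m + 1) ^ 2 := by
        rw [hx₁def, hb, ha]; ring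
    _ ≤ 7 * (C + 1) ^ 3 * (C ^ 2 * (L + 1) + 54 * C ^ 3) * (1 + m ^ 3) :=
        poly_final C L m hC hL0 hm0
end
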